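/- Let G be a permutation group on a finite set Q with |Q| ≥ 3. If G is primitive, then for every transformation f of Q of defect 1 the automaton ⟨Q, G ∪ {f}⟩ is completely reachable; i.e., every nonempty subset of Q is the image of Q under some element of the transformation monoid generated by G ∪ {f}. -/

import Mathlib

/-- (Theorem 3.1 of Hoffmann, forward direction.) If G is a primitive
permutation group on Q with |Q| ≥ 3, then for every transformation f of
defect 1 the automaton ⟨Q, G ∪ {f}⟩ is completely reachable. -/
theorem stmt15 {Q : Type*} [Fintype Q] (hQ : 3 ≤ Fintype.card Q)
    (G : Subgroup (Equiv.Perm Q))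
    (htrans : ∀ p q : Q, ∃ σ ∈ G, σ p = q)
    (hprim : ∀ B : Set Q, B.Nonempty →
      (∀ σ ∈ G, σ '' B = B ∨ (σ '' B) ∩ B = ∅) → B.Subsingleton ∨ B = Set.univ)
    (f : Function.End Q)
    (hf : ((Set.range (f : Q → Q))ᶜ : Set Q).ncard = 1) :
    ∀ A : Set Q, A.Nonempty →
      ∃ w ∈ Submonoid.closure
        (((fun σ : Equiv.Perm Q => (⇑σ : Function.End Q)) '' (G : Set (Equiv.Perm Q)) ∪ {f} : Set (Function.End Q))),
        Set.range (w : Q → Q) = A := by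
  classical
  set n := Fintype.card Q with hn
  obtain ⟨excl, hexcl⟩ := Set.ncard_eq_one.mp hf
  -- f is not injective
  have hninj : ¬ Function.Injective (f : Q → Q) := by
    intro h
    have hsurj := (Finite.injective_iff_surjective).mp h
    have h0 : (Set.range (f : Q → Q))ᶜ = (∅ : Set Q) := by
      rw [Set.range_eq_univ.mpr hsurj, Set.compl_univ]
    rw [h0] at hexcl
    exact (Set.singleton_ne_empty excl) hexcl.symm
  obtain ⟨p₁, p₂, hcol, hne⟩ := Function.not_injective_iff.mp hninj
  set d := (f : Q → Q) p₁ with hd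
  have hdr : d ∈ Set.range (f : Q → Q) := ⟨p₁, rfl⟩
  have hexr : excl ∉ Set.range (f : Q → Q) := by
    have h1 : excl ∈ (Set.range (f : Q → Q))ᶜ := by
      rw [hexcl]; exact Set.mem_singleton excl
    exact h1
  have hde : d ≠ excl := fun h => hexr (h ▸ hdr)
  -- cardinality of preimage
  have card_pre : ∀ S : Set Q, d ∈ S → excl ∉ S →
      ((f : Q → Q) ⁻¹' S).ncard = S.ncard + 1 ∧
      (f : Q → Q) '' ((f : Q → Q) ⁻¹' S) = S := by
    intro S hdS hexS
    have hSr : S ⊆ Set.range (f : Q → Q) := by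
      intro x hx
      by_contra hxr
      have h1 : x ∈ (Set.range (f : Q → Q))ᶜ := hxr
      rw [hexcl] at h1
      exact hexS (h1 ▸ hx)
    have himg : (f : Q → Q) '' ((f : Q → Q) ⁻¹' S) = S := by
      exact Set.image_preimage_eq_of_subset hSr
    refine ⟨?_, himg⟩
    have hp1 : p₁ ∈ (f : Q → Q) ⁻¹' S := hdS
    have hp2 : p₂ ∈ (f : Q → Q) ⁻¹' S := by
      show (f : Q → Q) p₂ ∈ S; rw [← hcol]; exact hdS
    -- lower bound
    have himg2 : (f : Q → Q) '' (((f : Q → Q) ⁻¹' S) \ {p₂}) = S := by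
      apply Set.Subset.antisymm
      · rintro x ⟨y, hy, rfl⟩; exact hy.1
      · intro x hx
        have hx' : x ∈ (f : Q → Q) '' ((f : Q → Q) ⁻¹' S) := by rw [himg]; exact hx
        obtain ⟨y, hy, rfl⟩ := hx'
        by_cases hyp : y = p₂
        · exact ⟨p₁, ⟨hp1, by simp [hne]⟩, by rw [hyp]; exact hcol⟩
        · exact ⟨y, ⟨hy, hyp⟩, rfl⟩
    have hlow : S.ncard + 1 ≤ ((f : Q → Q) ⁻¹' S).ncard := by
      have h1 : S.ncard ≤ (((f : Q → Q) ⁻¹' S) \ {p₂}).ncard := by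
        have := Set.ncard_image_le (f := (f : Q → Q)) (s := ((f : Q → Q) ⁻¹' S) \ {p₂}) (Set.toFinite _)
        rw [himg2] at this
        exact this
      have h2 : (((f : Q → Q) ⁻¹' S) \ {p₂}).ncard + 1 = ((f : Q → Q) ⁻¹' S).ncard :=
        Set.ncard_diff_singleton_add_one hp2 (Set.toFinite _)
      omega
    -- upper bound
    have hsub : Sᶜ \ {excl} ⊆ (f : Q → Q) '' ((f : Q → Q) ⁻¹' Sᶜ) := by
      rintro x ⟨hx1, hx2⟩
      have hxr : x ∈ Set.range (f : Q → Q) := by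
        by_contra h
        have h1 : x ∈ (Set.range (f : Q → Q))ᶜ := h
        rw [hexcl] at h1
        exact hx2 h1
      obtain ⟨y, rfl⟩ := hxr
      exact ⟨y, hx1, rfl⟩
    have hup : ((f : Q → Q) ⁻¹' S).ncard ≤ S.ncard + 1 := by
      have h1 : (Sᶜ \ {excl}).ncard ≤ ((f : Q → Q) ⁻¹' Sᶜ).ncard :=
        le_trans (Set.ncard_le_ncard hsub (Set.toFinite _)) (Set.ncard_image_le (Set.toFinite _))
      have h2 : (Sᶜ \ {excl}).ncard + 1 = (Sᶜ : Set Q).ncard :=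
        Set.ncard_diff_singleton_add_one hexS (Set.toFinite _)
      have h3 : S.ncard + (Sᶜ : Set Q).ncard = n := by
        rw [Set.ncard_add_ncard_compl, Nat.card_eq_fintype_card]
      have h4 : ((f : Q → Q) ⁻¹' S).ncard + (((f : Q → Q) ⁻¹' S)ᶜ : Set Q).ncard = n := by
        rw [Set.ncard_add_ncard_compl, Nat.card_eq_fintype_card]
      have h5 : ((f : Q → Q) ⁻¹' Sᶜ) = ((f : Q → Q) ⁻¹' S)ᶜ := Set.preimage_compl
      rw [h5] at h1
      omega
    omega
  -- key lemma from primitivity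
  have Lkey : ∀ A : Set Q, A.Nonempty → A ≠ Set.univ →
      ∃ h ∈ G, (h : Equiv.Perm Q) d ∈ A ∧ (h : Equiv.Perm Q) excl ∉ A := by
    intro A hAne hAuniv
    by_contra hcon
    push_neg at hcon
    set Closed : Set Q → Prop := fun S => ∀ σ ∈ G, (σ : Equiv.Perm Q) d ∈ S → σ excl ∈ S with hClosed
    have hAclosed : Closed A := fun σ hσ hmem => hcon σ hσ hmem
    set T : Set ℕ := {k : ℕ | ∃ S : Set Q, Closed S ∧ S.Nonempty ∧ S ≠ Set.univ ∧ S.ncard = k} with hT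
    have hTne : T.Nonempty := ⟨A.ncard, A, hAclosed, hAne, hAuniv, rfl⟩
    obtain ⟨B, hBclosed, hBne, hBuniv, hBcard⟩ := Nat.sInf_mem hTne
    have hmin : ∀ S : Set Q, Closed S → S.Nonempty → S ≠ Set.univ → B.ncard ≤ S.ncard := by
      intro S h1 h2 h3
      rw [hBcard]
      exact Nat.sInf_le ⟨S, h1, h2, h3, rfl⟩
    have hblock : ∀ σ ∈ G, (σ : Equiv.Perm Q) '' B = B ∨ ((σ : Equiv.Perm Q) '' B) ∩ B = ∅ := by
      intro σ hσ
      by_cases hint : ((σ : Equiv.Perm Q) '' B) ∩ B = ∅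
      · exact Or.inr hint
      left
      have hintne : (((σ : Equiv.Perm Q) '' B) ∩ B).Nonempty := Set.nonempty_iff_ne_empty.mpr hint
      have himgclosed : Closed ((σ : Equiv.Perm Q) '' B) := by
        intro τ hτ hmem
        obtain ⟨b, hb, hb2⟩ := hmem
        have h1 : (σ⁻¹ * τ) d ∈ B := by
          have : (σ⁻¹ * τ) d = σ⁻¹ (τ d) := rfl
          rw [this, ← hb2, ← Equiv.Perm.mul_apply, inv_mul_cancel, Equiv.Perm.one_apply]
          exact hb
        have h2 := hBclosed (σ⁻¹ * τ) (mul_mem (inv_mem hσ) hτ) h1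
        exact ⟨(σ⁻¹ * τ) excl, h2, by simp [Equiv.Perm.mul_apply]⟩
      have hinterclosed : Closed (((σ : Equiv.Perm Q) '' B) ∩ B) := by
        intro τ hτ hmem
        exact ⟨himgclosed τ hτ hmem.1, hBclosed τ hτ hmem.2⟩
      have hinteruniv : ((σ : Equiv.Perm Q) '' B) ∩ B ≠ Set.univ := by
        intro h
        apply hBuniv
        have : Set.univ ⊆ B := h ▸ Set.inter_subset_right
        exact Set.eq_univ_of_univ_subset this
      have h1 : B.ncard ≤ (((σ : Equiv.Perm Q) '' B) ∩ B).ncard :=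
        hmin _ hinterclosed hintne hinteruniv
      have h2 : ((σ : Equiv.Perm Q) '' B) ∩ B = B :=
        Set.eq_of_subset_of_ncard_le Set.inter_subset_right h1 (Set.toFinite _)
      have h3 : B ⊆ (σ : Equiv.Perm Q) '' B := by
        intro x hx
        have hx2 : x ∈ ((σ : Equiv.Perm Q) '' B) ∩ B := by rw [h2]; exact hx
        exact hx2.1
      have h4 : ((σ : Equiv.Perm Q) '' B).ncard ≤ B.ncard := by
        rw [Set.ncard_image_of_injective B (Equiv.injective _)]
      exact (Set.eq_of_subset_of_ncard_le h3 h4 (Set.toFinite _)).symm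
    rcases hprim B hBne hblock with hsub | huniv
    · obtain ⟨x, hx⟩ := hBne
      have hBx : B = {x} := hsub.eq_singleton_of_mem hx
      obtain ⟨σ, hσ, hσd⟩ := htrans d x
      have h1 : σ d ∈ B := by rw [hBx, hσd]; exact rfl
      have h2 := hBclosed σ hσ h1
      rw [hBx] at h2
      have : σ excl = σ d := by rw [hσd]; exact h2
      exact hde (σ.injective this).symm
    · exact hBuniv huniv
  -- the monoid
  set M := Submonoid.closure
      (((fun σ : Equiv.Perm Q => (⇑σ : Function.End Q)) '' (G : Set (Equiv.Perm Q)) ∪ {f} : Set (Function.End Q))) with hM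
  have hfM : f ∈ M := Submonoid.subset_closure (Set.mem_union_right _ rfl)
  have hgM : ∀ σ ∈ G, (⇑σ : Function.End Q) ∈ M := fun σ hσ =>
    Submonoid.subset_closure (Set.mem_union_left _ ⟨σ, hσ, rfl⟩)
  have hrange_mul : ∀ a b : Function.End Q, Set.range ((a * b : Function.End Q) : Q → Q)
      = (a : Q → Q) '' Set.range (b : Q → Q) := fun a b => Set.range_comp a b
  -- main induction
  have main : ∀ m : ℕ, ∀ A : Set Q, A.Nonempty → A.ncard + m = n →
      ∃ w ∈ M, Set.range (w : Q → Q) = A := by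
    intro m
    induction m with
    | zero =>
      intro A hAne hAcard
      refine ⟨1, one_mem M, ?_⟩
      have hAuniv : A = Set.univ := by
        apply Set.eq_of_subset_of_ncard_le (Set.subset_univ A) ?_ (Set.toFinite _)
        rw [Set.ncard_univ, Nat.card_eq_fintype_card]
        omega
      rw [hAuniv]
      exact Set.range_eq_univ.mpr (fun x => ⟨x, rfl⟩)
    | succ m ih =>
      intro A hAne hAcard
      have hAuniv : A ≠ Set.univ := by
        intro h
        rw [h, Set.ncard_univ, Nat.card_eq_fintype_card] at hAcard
        omega
      obtain ⟨h, hhG, hhd, hhexcl⟩ := Lkey A hAne hAuniv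
      set A' := (⇑(h : Equiv.Perm Q)) ⁻¹' A with hA'
      have hdA' : d ∈ A' := by show (h : Equiv.Perm Q) d ∈ A; exact hhd
      have hexA' : excl ∉ A' := hhexcl
      obtain ⟨hcard, himg⟩ := card_pre A' hdA' hexA'
      have hA'card : A'.ncard = A.ncard := by
        rw [hA', ← Equiv.image_symm_eq_preimage,
          Set.ncard_image_of_injective _ (Equiv.injective _)]
      set B := (f : Q → Q) ⁻¹' A' with hB
      have hBne : B.Nonempty := by
        rw [← Set.ncard_pos (Set.toFinite _), hcard]
        omega
      obtain ⟨w, hwM, hwrange⟩ := ih B hBne (by rw [hcard, hA'card]; omega)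
      let hEnd : Function.End Q := ⇑h
      have hEndM : hEnd ∈ M := hgM h hhG
      refine ⟨hEnd * (f * w), mul_mem hEndM (mul_mem hfM hwM), ?_⟩
      rw [hrange_mul, hrange_mul, hwrange, himg]
      exact Set.image_preimage_eq A (Equiv.surjective _)
  intro A hAne
  apply main (n - A.ncard) A hAne
  have : A.ncard ≤ n := by
    rw [hn, ← Nat.card_eq_fintype_card, ← Set.ncard_univ]
    exact Set.ncard_le_ncard (Set.subset_univ A) (Set.toFinite _)
  omega
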